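/- arXiv:0912.0576 — 2 statements merged into one kernel-verified Lean document; each statement's English description precedes it below -/
import Mathlib

section
/- Let W be a vector space over ℚ and let V = ℝ ⊗_ℚ W be its extension of scalars to ℝ. Let J be a positive integer, let v, v₁, …, v_J be elements of W, and suppose there exist real numbers γ₁, …, γ_J, all strictly positive, such that 1 ⊗ v = Σ_{j=1}^J γ_j (1 ⊗ v_j) holds in V. Then there exist strictly positive rational numbers γ̂₁, …, γ̂_J such that v = Σ_{j=1}^J γ̂_j v_j holds in W. -/
open TensorProduct

/-- Rationality of coefficients: if a vector `v` of a `ℚ`-vector space `W` is, after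
extension of scalars to `ℝ`, a linear combination of `1 ⊗ vⱼ` with strictly positive real
coefficients, then `v` is a linear combination of the `vⱼ` with strictly positive rational
coefficients. -/
theorem rationality_of_coefficients
    (W : Type*) [AddCommGroup W] [Module ℚ W]
    (J : ℕ) (hJ : 1 ≤ J) (v : W) (vj : Fin J → W) (γ : Fin J → ℝ)
    (hpos : ∀ j, 0 < γ j)
    (h : (1 : ℝ) ⊗ₜ[ℚ] v = ∑ j, γ j • ((1 : ℝ) ⊗ₜ[ℚ] vj j)) :
    ∃ γ' : Fin J → ℚ, (∀ j, 0 < γ' j) ∧ v = ∑ j, γ' j • vj j := by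
  classical
  -- The finite-dimensional `ℚ`-subspace of `ℝ` spanned by `1` and the `γ j`.
  set E : Submodule ℚ ℝ := Submodule.span ℚ (insert (1 : ℝ) (Set.range γ)) with hEdef
  have hfd : FiniteDimensional ℚ E :=
    FiniteDimensional.span_of_finite ℚ ((Set.finite_range γ).insert 1)
  obtain ⟨F, hF⟩ := Submodule.exists_isCompl E
  set d := Module.finrank ℚ E with hd
  let bE : Module.Basis (Fin d) ℚ E := Module.finBasis ℚ E
  -- coordinate functionals on `ℝ`
  let π : Fin d → (ℝ →ₗ[ℚ] ℚ) := fun t => (bE.coord t).comp (E.linearProjOfIsCompl F hF)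
  have hπ : ∀ (r : ℝ), r ∈ E → r = ∑ t, ((π t r : ℚ) : ℝ) * (bE t : ℝ) := by
    intro r hr
    have h1 : ∀ t, π t r = bE.repr ⟨r, hr⟩ t := by
      intro t
      have : E.linearProjOfIsCompl F hF r = ⟨r, hr⟩ :=
        Submodule.linearProjOfIsCompl_apply_left hF ⟨r, hr⟩
      simp [π, Module.Basis.coord_apply, this]
    have h2 := bE.sum_repr ⟨r, hr⟩
    have h3 := congrArg (Subtype.val) h2
    push_cast at h3
    simp only [h1]
    conv_lhs => rw [← h3]
    refine Finset.sum_congr rfl fun t _ => ?_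
    rw [Rat.smul_def]
  have h1E : (1 : ℝ) ∈ E := Submodule.subset_span (Set.mem_insert _ _)
  have hγE : ∀ j, γ j ∈ E := fun j =>
    Submodule.subset_span (Set.mem_insert_iff.mpr (Or.inr ⟨j, rfl⟩))
  -- project the tensor identity
  have key : ∀ t, (π t 1) • v = ∑ j, (π t (γ j)) • vj j := by
    intro t
    have hc := congrArg (TensorProduct.lift ((LinearMap.lsmul ℚ W).comp (π t))) h
    simpa [map_sum, smul_tmul', smul_eq_mul, mul_one, TensorProduct.lift.tmul] using hc
  -- real coordinate identities
  have h1R : (1 : ℝ) = ∑ t, ((π t 1 : ℚ) : ℝ) * (bE t : ℝ) := hπ 1 h1E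
  have hγR : ∀ j, γ j = ∑ t, ((π t (γ j) : ℚ) : ℝ) * (bE t : ℝ) := fun j => hπ (γ j) (hγE j)
  -- an open set of good coefficient vectors
  have hcont : ∀ (c : Fin d → ℝ), Continuous fun x : Fin d → ℝ => ∑ t, x t * c t :=
    fun c => continuous_finset_sum _ fun t _ => (continuous_apply t).mul continuous_const
  set S : Set (Fin d → ℝ) :=
    {x | 0 < ∑ t, x t * ((π t 1 : ℚ) : ℝ)} ∩
      ⋂ j, {x | 0 < ∑ t, x t * ((π t (γ j) : ℚ) : ℝ)} with hSdef
  have hSopen : IsOpen S :=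
    (isOpen_lt continuous_const (hcont _)).inter
      (isOpen_iInter_of_finite fun j => isOpen_lt continuous_const (hcont _))
  have huS : (fun t => (bE t : ℝ)) ∈ S := by
    constructor
    · show (0:ℝ) < ∑ t, (bE t : ℝ) * ((π t 1 : ℚ) : ℝ)
      have : (∑ t, (bE t : ℝ) * ((π t 1 : ℚ) : ℝ)) = 1 := by
        conv_rhs => rw [h1R]
        exact Finset.sum_congr rfl fun t _ => mul_comm _ _
      rw [this]; exact one_pos
    · refine Set.mem_iInter.mpr fun j => ?_
      show (0:ℝ) < ∑ t, (bE t : ℝ) * ((π t (γ j) : ℚ) : ℝ)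
      have : (∑ t, (bE t : ℝ) * ((π t (γ j) : ℚ) : ℝ)) = γ j := by
        conv_rhs => rw [hγR j]
        exact Finset.sum_congr rfl fun t _ => mul_comm _ _
      rw [this]; exact hpos j
  obtain ⟨ε, hε, hball⟩ := Metric.isOpen_iff.mp hSopen _ huS
  choose lam hlam1 hlam2 using fun t => exists_rat_btwn (lt_add_of_pos_right ((bE t : ℝ)) hε)
  have hmem : (fun t => ((lam t : ℚ) : ℝ)) ∈ S := by
    apply hball
    rw [Metric.mem_ball, dist_pi_lt_iff hε]
    intro t
    rw [Real.dist_eq, abs_lt]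
    constructor <;> [linarith [hlam1 t, hlam2 t]; linarith [hlam1 t, hlam2 t]]
  set α : ℚ := ∑ t, lam t * π t 1 with hα
  set β : Fin J → ℚ := fun j => ∑ t, lam t * π t (γ j) with hβ
  have hαpos : 0 < α := by
    have h0 : (0:ℝ) < ∑ t, ((lam t : ℚ) : ℝ) * ((π t 1 : ℚ) : ℝ) := hmem.1
    have hcast : ((α : ℚ) : ℝ) = ∑ t, ((lam t : ℚ) : ℝ) * ((π t 1 : ℚ) : ℝ) := by
      rw [hα]; push_cast; ring
    have : (0:ℝ) < ((α : ℚ) : ℝ) := by rw [hcast]; exact h0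
    exact_mod_cast this
  have hβpos : ∀ j, 0 < β j := by
    intro j
    have h0 : (0:ℝ) < ∑ t, ((lam t : ℚ) : ℝ) * ((π t (γ j) : ℚ) : ℝ) := Set.mem_iInter.mp hmem.2 j
    have hcast : ((β j : ℚ) : ℝ) = ∑ t, ((lam t : ℚ) : ℝ) * ((π t (γ j) : ℚ) : ℝ) := by
      rw [hβ]; push_cast; ring
    have : (0:ℝ) < ((β j : ℚ) : ℝ) := by rw [hcast]; exact h0
    exact_mod_cast this
  have heq : α • v = ∑ j, β j • vj j := by
    calc α • v = ∑ t, lam t • ((π t 1) • v) := by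
          rw [hα, Finset.sum_smul]; exact Finset.sum_congr rfl fun t _ => mul_smul _ _ _
      _ = ∑ t, lam t • ∑ j, (π t (γ j)) • vj j := by
          exact Finset.sum_congr rfl fun t _ => by rw [key t]
      _ = ∑ t, ∑ j, (lam t * π t (γ j)) • vj j := by
          refine Finset.sum_congr rfl fun t _ => ?_
          rw [Finset.smul_sum]
          exact Finset.sum_congr rfl fun j _ => (mul_smul _ _ _).symm
      _ = ∑ j, β j • vj j := by
          rw [Finset.sum_comm]
          refine Finset.sum_congr rfl fun j _ => ?_
          rw [hβ]
          exact (Finset.sum_smul).symm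
  refine ⟨fun j => α⁻¹ * β j, fun j => mul_pos (inv_pos.mpr hαpos) (hβpos j), ?_⟩
  have hv : v = α⁻¹ • (α • v) := by
    rw [smul_smul, inv_mul_cancel₀ (ne_of_gt hαpos), one_smul]
  rw [hv, heq, Finset.smul_sum]
  exact Finset.sum_congr rfl fun j _ => by simp [smul_smul]
end

section
/- Let n ≥ 2 be an integer and let (a_{λν})_{1≤λ,ν≤n} be any n×n matrix of complex numbers. Then Σ_{λ,ν=1}^n (−1)^{λ+ν}·a_{λν}·conj(a_{νλ}) = Σ_{λ,ν=1}^n |a_{λν}|² − Σ_{1≤λ<ν≤n} |(−1)^{n−ν}·a_{λν} + (−1)^{n−λ−1}·a_{νλ}|². -/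
open Finset

private lemma sign_lemma (n l v : ℕ) (hl : l < v) (hv : v < n) :
    (-1 : ℂ) ^ (n - 1 - v) * (-1 : ℂ) ^ (n - 2 - l) = -(-1 : ℂ) ^ (l + v) := by
  have he : (n - 1 - v) + (n - 2 - l) + (l + v) = 2 * (n - 2) + 1 := by omega
  have h : (-1 : ℂ) ^ (n - 1 - v) * (-1 : ℂ) ^ (n - 2 - l) * (-1 : ℂ) ^ (l + v) = -1 := by
    rw [← pow_add, ← pow_add, he]
    exact Odd.neg_one_pow ⟨n - 2, by ring⟩
  have h2 : (-1 : ℂ) ^ (l + v) * (-1 : ℂ) ^ (l + v) = 1 := by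
    rw [← pow_add]
    exact Even.neg_one_pow ⟨l + v, rfl⟩
  set A := (-1 : ℂ) ^ (n - 1 - v) with hA
  set B := (-1 : ℂ) ^ (n - 2 - l) with hB
  set C := (-1 : ℂ) ^ (l + v) with hC
  linear_combination C * h - A * B * h2

private lemma sum_split (n : ℕ) (f : Fin n → Fin n → ℂ) :
    ∑ l : Fin n, ∑ v : Fin n, f l v =
      (∑ l : Fin n, f l l) +
        ∑ l : Fin n, ∑ v ∈ Finset.univ.filter (fun v => l < v), (f l v + f v l) := by
  classical
  have hpt : ∀ l v : Fin n, f l v =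
      (if v = l then f l v else 0) + (if l < v then f l v else 0) +
        (if v < l then f l v else 0) := by
    intro l v
    rcases lt_trichotomy l v with h | h | h
    · rw [if_neg h.ne', if_pos h, if_neg (asymm h)]; ring
    · subst h; simp
    · rw [if_neg h.ne, if_neg (asymm h), if_pos h]; ring
  calc ∑ l : Fin n, ∑ v : Fin n, f l v
      = ∑ l : Fin n, ∑ v : Fin n,
          ((if v = l then f l v else 0) + (if l < v then f l v else 0) +
            (if v < l then f l v else 0)) := by
        refine Finset.sum_congr rfl fun l _ => Finset.sum_congr rfl fun v _ => hpt l v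
    _ = (∑ l : Fin n, f l l) +
          (∑ l : Fin n, ∑ v : Fin n, (if l < v then f l v else 0)) +
          (∑ l : Fin n, ∑ v : Fin n, (if v < l then f l v else 0)) := by
        simp [Finset.sum_add_distrib]
    _ = (∑ l : Fin n, f l l) +
          (∑ l : Fin n, ∑ v : Fin n, (if l < v then f l v else 0)) +
          (∑ l : Fin n, ∑ v : Fin n, (if l < v then f v l else 0)) := by
        congr 1
        rw [Finset.sum_comm]
    _ = (∑ l : Fin n, f l l) +
          ∑ l : Fin n, ∑ v ∈ Finset.univ.filter (fun v => l < v), (f l v + f v l) := by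
        rw [add_assoc, ← Finset.sum_add_distrib]
        congr 1
        refine Finset.sum_congr rfl fun l _ => ?_
        rw [← Finset.sum_add_distrib, Finset.sum_filter]
        refine Finset.sum_congr rfl fun v _ => ?_
        split_ifs <;> simp

private lemma cross_expand (n : ℕ) (l v : Fin n) (h : l < v) (x y : ℂ) :
    ((-1 : ℂ) ^ (n - 1 - (v : ℕ)) * x + (-1 : ℂ) ^ (n - 2 - (l : ℕ)) * y) *
        (starRingEnd ℂ)
          ((-1 : ℂ) ^ (n - 1 - (v : ℕ)) * x + (-1 : ℂ) ^ (n - 2 - (l : ℕ)) * y) =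
      x * (starRingEnd ℂ) x + y * (starRingEnd ℂ) y -
        (-1 : ℂ) ^ ((l : ℕ) + (v : ℕ)) *
          (x * (starRingEnd ℂ) y + y * (starRingEnd ℂ) x) := by
  have hs := sign_lemma n l v h v.isLt
  have h1 : (-1 : ℂ) ^ (n - 1 - (v : ℕ)) * (-1 : ℂ) ^ (n - 1 - (v : ℕ)) = 1 := by
    rw [← pow_add]; exact Even.neg_one_pow ⟨n - 1 - v, rfl⟩
  have h2 : (-1 : ℂ) ^ (n - 2 - (l : ℕ)) * (-1 : ℂ) ^ (n - 2 - (l : ℕ)) = 1 := by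
    rw [← pow_add]; exact Even.neg_one_pow ⟨n - 2 - l, rfl⟩
  simp only [map_add, map_mul, map_pow, map_neg, map_one]
  set A := (-1 : ℂ) ^ (n - 1 - (v : ℕ)) with hA
  set B := (-1 : ℂ) ^ (n - 2 - (l : ℕ)) with hB
  set C := (-1 : ℂ) ^ ((l : ℕ) + (v : ℕ)) with hC
  linear_combination (x * (starRingEnd ℂ) x) * h1 + (y * (starRingEnd ℂ) y) * h2 +
    (x * (starRingEnd ℂ) y + y * (starRingEnd ℂ) x) * hs

/-- The component identity of §5.8: for any `n × n` complex matrix `a` (indices `0`-based,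
so that the mathematical signs `(-1)^{λ+ν}`, `(-1)^{n-ν}`, `(-1)^{n-λ-1}` become
`(-1)^{λ+ν}`, `(-1)^{n-1-ν}`, `(-1)^{n-2-λ}`),
`Σ_{λ,ν} (-1)^{λ+ν} a_{λν} conj(a_{νλ})
  = Σ_{λ,ν} |a_{λν}|² − Σ_{λ<ν} |(-1)^{n-ν} a_{λν} + (-1)^{n-λ-1} a_{νλ}|²`. -/
theorem wedge_square_expansion
    (n : ℕ) (hn : 2 ≤ n) (a : Fin n → Fin n → ℂ) :
    ∑ l : Fin n, ∑ v : Fin n,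
        (-1 : ℂ) ^ ((l : ℕ) + (v : ℕ)) * a l v * (starRingEnd ℂ) (a v l) =
      ((∑ l : Fin n, ∑ v : Fin n, ‖a l v‖ ^ 2 : ℝ) : ℂ) -
        ((∑ l : Fin n, ∑ v ∈ Finset.univ.filter (fun v => l < v),
          ‖(-1 : ℂ) ^ (n - 1 - (v : ℕ)) * a l v +
            (-1 : ℂ) ^ (n - 2 - (l : ℕ)) * a v l‖ ^ 2 : ℝ) : ℂ) := by
  have habs : ∀ z : ℂ, ((‖z‖ : ℝ) : ℂ) ^ 2 = z * (starRingEnd ℂ) z := by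
    intro z
    rw [← Complex.ofReal_pow, Complex.sq_norm, Complex.mul_conj]
  rw [show ((∑ l : Fin n, ∑ v : Fin n, ‖a l v‖ ^ 2 : ℝ) : ℂ)
      = ∑ l : Fin n, ∑ v : Fin n, a l v * (starRingEnd ℂ) (a l v) by
    push_cast
    exact Finset.sum_congr rfl fun l _ => Finset.sum_congr rfl fun v _ => habs (a l v)]
  rw [show ((∑ l : Fin n, ∑ v ∈ Finset.univ.filter (fun v => l < v),
        ‖(-1 : ℂ) ^ (n - 1 - (v : ℕ)) * a l v +
          (-1 : ℂ) ^ (n - 2 - (l : ℕ)) * a v l‖ ^ 2 : ℝ) : ℂ)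
      = ∑ l : Fin n, ∑ v ∈ Finset.univ.filter (fun v => l < v),
          (a l v * (starRingEnd ℂ) (a l v) + a v l * (starRingEnd ℂ) (a v l) -
            (-1 : ℂ) ^ ((l : ℕ) + (v : ℕ)) *
              (a l v * (starRingEnd ℂ) (a v l) + a v l * (starRingEnd ℂ) (a l v))) by
    push_cast
    refine Finset.sum_congr rfl fun l _ => Finset.sum_congr rfl fun v hv => ?_
    rw [habs]
    exact cross_expand n l v (Finset.mem_filter.mp hv).2 (a l v) (a v l)]
  rw [sum_split n (fun l v => (-1 : ℂ) ^ ((l : ℕ) + (v : ℕ)) * a l v * (starRingEnd ℂ) (a v l)),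
    sum_split n (fun l v => a l v * (starRingEnd ℂ) (a l v))]
  rw [add_sub_assoc, ← Finset.sum_sub_distrib]
  congr 1
  · refine Finset.sum_congr rfl fun l _ => ?_
    have : (-1 : ℂ) ^ ((l : ℕ) + (l : ℕ)) = 1 := Even.neg_one_pow ⟨(l : ℕ), rfl⟩
    rw [this, one_mul]
  · refine Finset.sum_congr rfl fun l _ => ?_
    rw [← Finset.sum_sub_distrib]
    refine Finset.sum_congr rfl fun v _ => ?_
    have : (-1 : ℂ) ^ ((v : ℕ) + (l : ℕ)) = (-1 : ℂ) ^ ((l : ℕ) + (v : ℕ)) := by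
      rw [Nat.add_comm]
    rw [this]
    ring
end
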